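/- Let n ≥ 2 be a natural number, let a₁, …, aₙ be a probability vector, let 1 ≤ k < n, let 1/2 < p < 1, and set q = Σ_{j=1}^{k} aⱼ. Suppose |q − 1/2| ≤ ε where ε = √(1/(24·log₂(n))). Let N⁻¹ = p·q + (1−p)·(1−q) and M⁻¹ = p·(1−q) + (1−p)·q, and let b⁰ and b¹ be the Bayes updates of a at k with parameter p. Then the expected information increase satisfies N⁻¹·(H(a) − H(b⁰)) + M⁻¹·(H(a) − H(b¹)) ≥ I(p)·(1 − 1/(3·log₂(n))), where I(p) = 1 − H₂(p). -/

import Mathlib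

/-- Shannon entropy (base 2) of a vector `a` indexed by `0, …, n-1`:
`H(a) = −Σᵢ aᵢ·log₂(aᵢ)`, with the convention `0·log₂(0) = 0`. -/
noncomputable def shannonEntropy (n : ℕ) (a : ℕ → ℝ) : ℝ :=
  ∑ i ∈ Finset.range n, -(a i * Real.logb 2 (a i))

/-- Binary entropy `H₂(x) = −x·log₂(x) − (1−x)·log₂(1−x)`,
with the convention `0·log₂(0) = 0`. -/
noncomputable def binEntropy (x : ℝ) : ℝ :=
  -x * Real.logb 2 x - (1 - x) * Real.logb 2 (1 - x)

private lemma fent_upper (s : ℝ) (h1 : -1 < s) (h2 : s < 1) :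
    (1+s) * Real.log (1+s) + (1-s) * Real.log (1-s) ≤ 2 * s^2 := by
  have l1 : Real.log (1+s) ≤ s := by
    have := Real.log_le_sub_one_of_pos (show (0:ℝ) < 1+s by linarith); linarith
  have l2 : Real.log (1-s) ≤ -s := by
    have := Real.log_le_sub_one_of_pos (show (0:ℝ) < 1-s by linarith); linarith
  nlinarith [mul_le_mul_of_nonneg_left l1 (show (0:ℝ) ≤ 1+s by linarith),
             mul_le_mul_of_nonneg_left l2 (show (0:ℝ) ≤ 1-s by linarith)]

private lemma log_ratio (t : ℝ) (h0 : 0 ≤ t) (h1 : t < 1) :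
    2*t ≤ Real.log (1+t) - Real.log (1-t) := by
  have hd : ∀ x ∈ Set.Icc (0:ℝ) t, HasDerivAt
      (fun x : ℝ => Real.log (1+x) - Real.log (1-x) - 2*x)
      (1/(1+x) - (-1)/(1-x) - 2) x := by
    intro x hx
    have hx1 : (1:ℝ)+x ≠ 0 := by nlinarith [hx.1]
    have hx2 : (1:ℝ)-x ≠ 0 := by have := hx.2; nlinarith
    have d1 : HasDerivAt (fun y : ℝ => Real.log (1+y)) (1/(1+x)) x := by
      have := ((hasDerivAt_id x).const_add 1).log hx1
      simpa using this
    have d2 : HasDerivAt (fun y : ℝ => Real.log (1-y)) ((-1)/(1-x)) x := by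
      have := ((hasDerivAt_id x).const_sub 1).log hx2
      simpa using this
    have d3 : HasDerivAt (fun y : ℝ => 2*y) 2 x := by
      simpa using (hasDerivAt_id x).const_mul 2
    exact (d1.sub d2).sub d3
  have mono : MonotoneOn (fun x : ℝ => Real.log (1+x) - Real.log (1-x) - 2*x)
      (Set.Icc 0 t) := by
    apply monotoneOn_of_deriv_nonneg (convex_Icc 0 t)
    · exact fun x hx => (hd x hx).continuousAt.continuousWithinAt
    · intro x hx
      have hx' : x ∈ Set.Icc (0:ℝ) t := interior_subset hx
      exact (hd x hx').differentiableAt.differentiableWithinAt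
    · intro x hx
      have hx' : x ∈ Set.Icc (0:ℝ) t := interior_subset hx
      rw [(hd x hx').deriv]
      have hx0 : 0 ≤ x := hx'.1
      have hx1 : x < 1 := lt_of_le_of_lt hx'.2 h1
      have a1 : (1-x) ≤ 1/(1+x) := by
        rw [le_div_iff₀ (by nlinarith)]; nlinarith
      have a2 : (1+x) ≤ 1/(1-x) := by
        rw [le_div_iff₀ (by nlinarith)]; nlinarith
      have : (-1)/(1-x) = -(1/(1-x)) := by ring
      rw [this]; linarith
  have h00 : (0:ℝ) ∈ Set.Icc (0:ℝ) t := by constructor <;> linarith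
  have htt : t ∈ Set.Icc (0:ℝ) t := by constructor <;> linarith
  have := mono h00 htt h0
  simp at this
  linarith

private lemma fent_lower (t : ℝ) (h0 : 0 ≤ t) (h1 : t < 1) :
    t^2 ≤ (1+t) * Real.log (1+t) + (1-t) * Real.log (1-t) := by
  have hd : ∀ x ∈ Set.Icc (0:ℝ) t, HasDerivAt
      (fun x : ℝ => (1+x) * Real.log (1+x) + (1-x) * Real.log (1-x) - x^2)
      (Real.log (1+x) - Real.log (1-x) - 2*x) x := by
    intro x hx
    have hx1 : (0:ℝ) < 1+x := by nlinarith [hx.1]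
    have hx2 : (0:ℝ) < 1-x := by have := hx.2; nlinarith
    have d1 : HasDerivAt (fun y : ℝ => (1+y) * Real.log (1+y)) (Real.log (1+x) + 1) x := by
      have h' : HasDerivAt (fun y : ℝ => (1+y) * Real.log (1+y))
          (Real.log (1+x) + (1+x) * (1+x)⁻¹) x := by
        have := ((hasDerivAt_id x).const_add 1).mul (((hasDerivAt_id x).const_add 1).log hx1.ne')
        simp at this; exact this
      have e : (1+x) * (1+x)⁻¹ = (1:ℝ) := by field_simp
      rwa [e] at h'
    have d2 : HasDerivAt (fun y : ℝ => (1-y) * Real.log (1-y)) (-Real.log (1-x) - 1) x := by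
      have h' : HasDerivAt (fun y : ℝ => (1-y) * Real.log (1-y))
          (-Real.log (1-x) + (1-x) * (-1/(1-x))) x := by
        have := ((hasDerivAt_id x).const_sub 1).mul (((hasDerivAt_id x).const_sub 1).log hx2.ne')
        simp at this; exact this
      have e : (1-x) * (-1/(1-x)) = (-1:ℝ) := by field_simp
      rw [e] at h'
      convert h' using 1
      ring
    have d3 : HasDerivAt (fun y : ℝ => y^2) (2*x) x := by
      simpa using (hasDerivAt_pow 2 x)
    have := ((d1.add d2).sub d3 :
      HasDerivAt (fun y : ℝ => (1+y) * Real.log (1+y) + (1-y) * Real.log (1-y) - y^2) _ x)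
    exact this.congr_deriv (by ring)
  have mono : MonotoneOn (fun x : ℝ => (1+x) * Real.log (1+x) + (1-x) * Real.log (1-x) - x^2)
      (Set.Icc 0 t) := by
    apply monotoneOn_of_deriv_nonneg (convex_Icc 0 t)
    · exact fun x hx => (hd x hx).continuousAt.continuousWithinAt
    · intro x hx
      exact (hd x (interior_subset hx)).differentiableAt.differentiableWithinAt
    · intro x hx
      have hx' : x ∈ Set.Icc (0:ℝ) t := interior_subset hx
      rw [(hd x hx').deriv]
      have := log_ratio x hx'.1 (lt_of_le_of_lt hx'.2 h1)
      linarith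
  have h00 : (0:ℝ) ∈ Set.Icc (0:ℝ) t := by constructor <;> linarith
  have htt : t ∈ Set.Icc (0:ℝ) t := by constructor <;> linarith
  have := mono h00 htt h0
  simp at this
  linarith

private lemma one_sub_binE (x : ℝ) (h0 : 0 < x) (h1 : x < 1) :
    1 - binEntropy x =
      ((1+(2*x-1)) * Real.log (1+(2*x-1)) + (1-(2*x-1)) * Real.log (1-(2*x-1)))
        / (2 * Real.log 2) := by
  have hlog2 : Real.log 2 ≠ 0 := (Real.log_pos one_lt_two).ne'
  have e1 : Real.log (1+(2*x-1)) = Real.log 2 + Real.log x := by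
    rw [show (1+(2*x-1)) = 2*x by ring, Real.log_mul two_ne_zero h0.ne']
  have e2 : Real.log (1-(2*x-1)) = Real.log 2 + Real.log (1-x) := by
    rw [show (1-(2*x-1)) = 2*(1-x) by ring,
        Real.log_mul two_ne_zero (by linarith : (1:ℝ)-x ≠ 0)]
  unfold binEntropy
  rw [e1, e2]
  simp only [Real.logb]
  field_simp
  ring

private lemma update_entropy (n k : ℕ) (hkn : k ≤ n) (a : ℕ → ℝ)
    (ha0 : ∀ i ∈ Finset.range n, 0 ≤ a i)
    (c₁ c₂ N : ℝ) (hc₁ : 0 < c₁) (hc₂ : 0 < c₂) (hN : 0 < N)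
    (b : ℕ → ℝ) (hb : ∀ j, b j = if j < k then c₁ * a j / N else c₂ * a j / N) :
    N * shannonEntropy n b =
      -(c₁ * ∑ i ∈ Finset.range k, a i * Real.logb 2 (a i))
      - Real.logb 2 c₁ * (c₁ * ∑ i ∈ Finset.range k, a i)
      + Real.logb 2 N * (c₁ * ∑ i ∈ Finset.range k, a i)
      + (-(c₂ * ∑ i ∈ Finset.Ico k n, a i * Real.logb 2 (a i))
      - Real.logb 2 c₂ * (c₂ * ∑ i ∈ Finset.Ico k n, a i)
      + Real.logb 2 N * (c₂ * ∑ i ∈ Finset.Ico k n, a i)) := by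
  have comb : ∀ (s : Finset ℕ) (c d e : ℝ),
      (∑ i ∈ s, (-(c * (a i * Real.logb 2 (a i))) - d * (c * a i) + e * (c * a i)))
        = -(c * ∑ i ∈ s, a i * Real.logb 2 (a i)) - d * (c * ∑ i ∈ s, a i)
          + e * (c * ∑ i ∈ s, a i) := by
    intro s c d e
    rw [Finset.sum_add_distrib, Finset.sum_sub_distrib]
    simp only [Finset.mul_sum, Finset.sum_neg_distrib]
  unfold shannonEntropy
  rw [Finset.mul_sum]
  rw [Finset.range_eq_Ico, ← Finset.sum_Ico_consecutive _ (Nat.zero_le k) hkn]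
  rw [← Finset.range_eq_Ico, ← comb, ← comb]
  congr 1
  · apply Finset.sum_congr rfl
    intro i hi
    have hik : i < k := Finset.mem_range.mp hi
    have hai : 0 ≤ a i := ha0 i (Finset.mem_range.mpr (lt_of_lt_of_le hik hkn))
    rw [hb i, if_pos hik]
    rcases hai.eq_or_lt with h | h
    · simp [← h]
    · rw [Real.logb_div (by positivity) hN.ne', Real.logb_mul hc₁.ne' h.ne']
      field_simp
      ring
  · apply Finset.sum_congr rfl
    intro i hi
    have hik : ¬ (i < k) := by simpa using (Finset.mem_Ico.mp hi).1
    have hai : 0 ≤ a i := ha0 i (Finset.mem_range.mpr (Finset.mem_Ico.mp hi).2)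
    rw [hb i, if_neg hik]
    rcases hai.eq_or_lt with h | h
    · simp [← h]
    · rw [Real.logb_div (by positivity) hN.ne', Real.logb_mul hc₂.ne' h.ne']
      field_simp
      ring

set_option maxHeartbeats 1000000 in
/-- Let `n ≥ 2`, let `a` be a probability vector on `{1,…,n}`
(indexed here by `0, …, n-1`), `1 ≤ k < n`, `1/2 < p < 1`, `q = Σ_{j=1}^{k} aⱼ`, and
suppose `|q − 1/2| ≤ ε` where `ε = √(1/(24·log₂ n))`. Let `N⁻¹ = p·q + (1−p)·(1−q)`,
`M⁻¹ = p·(1−q) + (1−p)·q`, and let `b⁰, b¹` be the Bayes updates of `a` at `k` with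
parameter `p`. Then the expected information increase satisfies
`N⁻¹·(H(a) − H(b⁰)) + M⁻¹·(H(a) − H(b¹)) ≥ I(p)·(1 − 1/(3·log₂ n))`
where `I(p) = 1 − H₂(p)`. -/
theorem bayes_update_information_gain_with_eps_par (n k : ℕ) (hn : 2 ≤ n)
    (a : ℕ → ℝ) (p : ℝ)
    (hk1 : 1 ≤ k) (hkn : k < n)
    (ha0 : ∀ i ∈ Finset.range n, 0 ≤ a i)
    (ha1 : ∑ i ∈ Finset.range n, a i = 1)
    (hp0 : 1/2 < p) (hp1 : p < 1)
    (q : ℝ) (hq : q = ∑ j ∈ Finset.range k, a j)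
    (ε : ℝ) (hε : ε = Real.sqrt (1 / (24 * Real.logb 2 n)))
    (hqε : |q - 1/2| ≤ ε)
    (Ninv Minv : ℝ)
    (hN : Ninv = p * q + (1 - p) * (1 - q))
    (hM : Minv = p * (1 - q) + (1 - p) * q)
    (b0 b1 : ℕ → ℝ)
    (hb0 : ∀ j, b0 j = if j < k then p * a j / Ninv else (1 - p) * a j / Ninv)
    (hb1 : ∀ j, b1 j = if j < k then (1 - p) * a j / Minv else p * a j / Minv) :
    Ninv * (shannonEntropy n a - shannonEntropy n b0)
      + Minv * (shannonEntropy n a - shannonEntropy n b1)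
      ≥ (1 - binEntropy p) * (1 - 1 / (3 * Real.logb 2 n)) := by
  have hp0' : (0:ℝ) < p := by linarith
  have hp1' : (0:ℝ) < 1 - p := by linarith
  have hq0 : 0 ≤ q := by
    rw [hq]
    exact Finset.sum_nonneg fun i hi =>
      ha0 i (Finset.mem_range.mpr (lt_of_lt_of_le (Finset.mem_range.mp hi) hkn.le))
  have hq1 : q ≤ 1 := by
    rw [hq, ← ha1]
    exact Finset.sum_le_sum_of_subset_of_nonneg
      (Finset.range_subset_range.mpr hkn.le) (fun i hi _ => ha0 i hi)
  have hNpos : 0 < Ninv := by nlinarith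
  have hMpos : 0 < Minv := by nlinarith
  have hMN : Minv = 1 - Ninv := by rw [hN, hM]; ring
  have hNu : Ninv < 1 := by linarith
  have hQ2 : ∑ i ∈ Finset.Ico k n, a i = 1 - q := by
    have h := ha1
    rw [Finset.range_eq_Ico, ← Finset.sum_Ico_consecutive _ (Nat.zero_le k) hkn.le,
        ← Finset.range_eq_Ico, ← hq] at h
    linarith
  have e1 := update_entropy n k hkn.le a ha0 p (1-p) Ninv hp0' hp1' hNpos b0 hb0
  have e2 := update_entropy n k hkn.le a ha0 (1-p) p Minv hp1' hp0' hMpos b1 hb1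
  rw [← hq, hQ2] at e1 e2
  have e0 : shannonEntropy n a
      = -((∑ i ∈ Finset.range k, a i * Real.logb 2 (a i))
          + ∑ i ∈ Finset.Ico k n, a i * Real.logb 2 (a i)) := by
    unfold shannonEntropy
    rw [Finset.range_eq_Ico, ← Finset.sum_Ico_consecutive _ (Nat.zero_le k) hkn.le,
        ← Finset.range_eq_Ico, Finset.sum_neg_distrib, Finset.sum_neg_distrib]
    ring
  have key : Ninv * (shannonEntropy n a - shannonEntropy n b0)
      + Minv * (shannonEntropy n a - shannonEntropy n b1)
      = binEntropy Ninv - binEntropy p := by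
    rw [mul_sub, mul_sub, e0, e1, e2, hMN]
    unfold binEntropy
    linear_combination (Real.logb 2 Ninv - Real.logb 2 (1 - Ninv)) * hN
  rw [key]
  -- now the analytic part
  have hn2 : (2:ℝ) ≤ (n:ℝ) := by exact_mod_cast hn
  have hL : 1 ≤ Real.logb 2 (n:ℝ) := by
    rw [show (1:ℝ) = Real.logb 2 2 by simp]
    exact Real.logb_le_logb_of_le (by norm_num) (by norm_num) hn2
  have hLpos : 0 < Real.logb 2 (n:ℝ) := by linarith
  have hεsq : ε^2 = 1/(24 * Real.logb 2 (n:ℝ)) := by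
    rw [hε, Real.sq_sqrt (by positivity)]
  have habs := abs_le.mp hqε
  have hq12 : (q - 1/2)^2 ≤ 1/(24 * Real.logb 2 (n:ℝ)) := by
    rw [← hεsq]; exact sq_le_sq' (by linarith [habs.1]) habs.2
  have h24 : (q - 1/2)^2 * (24 * Real.logb 2 (n:ℝ)) ≤ 1 := by
    rw [← le_div_iff₀ (by positivity)]; exact hq12
  have ht0 : (0:ℝ) < 2*p - 1 := by linarith
  have ht1 : 2*p - 1 < 1 := by linarith
  have hsN1 : -1 < 2*Ninv - 1 := by linarith
  have hsN2 : 2*Ninv - 1 < 1 := by linarith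
  have hup := fent_upper (2*Ninv - 1) hsN1 hsN2
  have hlow := fent_lower (2*p - 1) ht0.le ht1
  have hbN := one_sub_binE Ninv hNpos hNu
  have hbp := one_sub_binE p hp0' hp1
  have h6L : 6 * Real.logb 2 (n:ℝ) * (2*Ninv - 1)^2 ≤ (2*p - 1)^2 := by
    have expand : (2*Ninv - 1)^2 = (2*p - 1)^2 * (2*q - 1)^2 := by rw [hN]; ring
    rw [expand]
    linarith [mul_le_mul_of_nonneg_left h24 (sq_nonneg (2*p - 1))]
  have hfs : ((1+(2*Ninv-1)) * Real.log (1+(2*Ninv-1))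
        + (1-(2*Ninv-1)) * Real.log (1-(2*Ninv-1))) * (3 * Real.logb 2 (n:ℝ))
      ≤ (1+(2*p-1)) * Real.log (1+(2*p-1)) + (1-(2*p-1)) * Real.log (1-(2*p-1)) := by
    have step := mul_le_mul_of_nonneg_right hup
      (by positivity : (0:ℝ) ≤ 3 * Real.logb 2 (n:ℝ))
    linarith [step, h6L, hlow]
  have hlog2 : (0:ℝ) < Real.log 2 := Real.log_pos one_lt_two
  have hv : 1 - binEntropy Ninv ≤ (1 - binEntropy p) / (3 * Real.logb 2 (n:ℝ)) := by
    rw [hbN, hbp, div_div, div_le_div_iff₀ (by positivity) (by positivity)]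
    linarith [mul_le_mul_of_nonneg_right hfs (by positivity : (0:ℝ) ≤ 2 * Real.log 2)]
  have expand2 : (1 - binEntropy p) * (1 - 1 / (3 * Real.logb 2 (n:ℝ)))
      = (1 - binEntropy p) - (1 - binEntropy p) / (3 * Real.logb 2 (n:ℝ)) := by
    ring
  rw [ge_iff_le, expand2]
  linarith
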